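/- Let f : 2^N → ℝ be a non-negative submodular function on a finite ground set N, let S, A ⊆ N, and let k be an integer with 1 ≤ k < |A|. Then the average over all size-k subsets B of A satisfies (1/binom(|A|,k)) · Σ_{B ⊆ A, |B| = k} f(S ∪ B) ≥ f(S) − (k/(|A| − k)) · max{ f(S') : S ⊆ S' ⊆ S ∪ A }. -/

import Mathlib

open Finset

def Submodular {α : Type*} [DecidableEq α] (f : Finset α → ℝ) : Prop :=
  ∀ A B : Finset α, f A + f B ≥ f (A ∪ B) + f (A ∩ B)

/-- Key pointwise lemma: sum of single-element additions. -/
lemma sum_insert_ge {α : Type*} [DecidableEq α] (f : Finset α → ℝ)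
    (hf : Submodular f) (X : Finset α) (C : Finset α) :
    ∑ c ∈ C, f (insert c X) ≥ f (X ∪ C) + ((C.card : ℝ) - 1) * f X := by
  induction C using Finset.induction_on with
  | empty => simp
  | @insert c C' hc ih =>
    rw [Finset.sum_insert hc]
    have hint : (insert c X) ∩ (X ∪ C') = X := by
      ext x
      simp only [Finset.mem_inter, Finset.mem_insert, Finset.mem_union]
      constructor
      · rintro ⟨h1 | h1, h2 | h2⟩
        · exact h2
        · subst h1; exact absurd h2 hc
        · exact h1
        · exact h1
      · intro h; exact ⟨Or.inr h, Or.inl h⟩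
    have huni : insert c X ∪ (X ∪ C') = X ∪ insert c C' := by
      ext x
      simp only [Finset.mem_union, Finset.mem_insert]
      tauto
    have hsub := hf (insert c X) (X ∪ C')
    rw [hint, huni] at hsub
    have hcard : ((insert c C').card : ℝ) = (C'.card : ℝ) + 1 := by
      rw [Finset.card_insert_of_notMem hc]; push_cast; ring
    rw [hcard]
    linarith

/-- Double counting lemma. -/
lemma count_lemma {α : Type*} [DecidableEq α] (A : Finset α) (j : ℕ) (g : Finset α → ℝ) :
    ∑ B ∈ A.powersetCard j, ∑ c ∈ A \ B, g (insert c B)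
      = ∑ B ∈ A.powersetCard (j + 1), ∑ _c ∈ B, g B := by
  rw [Finset.sum_sigma', Finset.sum_sigma']
  refine Finset.sum_bij' (fun p _ => (⟨insert p.2 p.1, p.2⟩ : Σ _ : Finset α, α))
    (fun p _ => (⟨p.1.erase p.2, p.2⟩ : Σ _ : Finset α, α)) ?_ ?_ ?_ ?_ ?_
  · rintro ⟨B, c⟩ hp
    simp only [Finset.mem_sigma, Finset.mem_powersetCard, Finset.mem_sdiff] at hp ⊢
    obtain ⟨⟨hBA, hBc⟩, hcA, hcB⟩ := hp
    refine ⟨⟨?_, ?_⟩, Finset.mem_insert_self _ _⟩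
    · exact Finset.insert_subset hcA hBA
    · rw [Finset.card_insert_of_notMem hcB, hBc]
  · rintro ⟨B, c⟩ hp
    simp only [Finset.mem_sigma, Finset.mem_powersetCard, Finset.mem_sdiff] at hp ⊢
    obtain ⟨⟨hBA, hBc⟩, hcB⟩ := hp
    refine ⟨⟨(Finset.erase_subset _ _).trans hBA, ?_⟩, hBA hcB, Finset.notMem_erase _ _⟩
    rw [Finset.card_erase_of_mem hcB, hBc]; rfl
  · rintro ⟨B, c⟩ hp
    simp only [Finset.mem_sigma, Finset.mem_sdiff] at hp
    simp [Finset.erase_insert hp.2.2]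
  · rintro ⟨B, c⟩ hp
    simp only [Finset.mem_sigma] at hp
    simp [Finset.insert_erase hp.2]
  · rintro ⟨B, c⟩ hp; rfl

/-- step: (j+1) * T(j+1) ≥ (n - (j+1)) * T(j). -/
lemma step_lemma {α : Type*} [DecidableEq α] (f : Finset α → ℝ) (hf0 : ∀ S, 0 ≤ f S)
    (hf : Submodular f) (S A : Finset α) (j : ℕ) (hj : j + 1 ≤ A.card) :
    ((j : ℝ) + 1) * ∑ B ∈ A.powersetCard (j + 1), f (S ∪ B)
      ≥ ((A.card : ℝ) - (j + 1)) * ∑ B ∈ A.powersetCard j, f (S ∪ B) := by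
  have key : ∑ B ∈ A.powersetCard j, ∑ c ∈ A \ B, f (S ∪ insert c B)
      = ((j : ℝ) + 1) * ∑ B ∈ A.powersetCard (j + 1), f (S ∪ B) := by
    rw [count_lemma A j (fun B => f (S ∪ B)), Finset.mul_sum]
    apply Finset.sum_congr rfl
    intro B hB
    rw [Finset.mem_powersetCard] at hB
    rw [Finset.sum_const, hB.2]
    ring
  rw [← key]
  rw [Finset.mul_sum]
  apply Finset.sum_le_sum
  intro B hB
  rw [Finset.mem_powersetCard] at hB
  have hcard : ((A \ B).card : ℝ) = (A.card : ℝ) - j := by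
    rw [Finset.card_sdiff_of_subset hB.1, hB.2]
    have h : j ≤ A.card := le_trans (Nat.le_succ j) hj
    push_cast [Nat.cast_sub h]
    ring
  have h1 : ∑ c ∈ A \ B, f (insert c (S ∪ B))
      ≥ f ((S ∪ B) ∪ (A \ B)) + (((A \ B).card : ℝ) - 1) * f (S ∪ B) :=
    sum_insert_ge f hf (S ∪ B) (A \ B)
  have h2 : ∑ c ∈ A \ B, f (S ∪ insert c B) = ∑ c ∈ A \ B, f (insert c (S ∪ B)) := by
    apply Finset.sum_congr rfl
    intro c _
    rw [Finset.union_insert]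
  rw [h2]
  have h3 : 0 ≤ f ((S ∪ B) ∪ (A \ B)) := hf0 _
  rw [hcard] at h1
  linarith

/-- main induction: T(k) ≥ choose * (n-k)/n * f S -/
lemma main_ind {α : Type*} [DecidableEq α] (f : Finset α → ℝ) (hf0 : ∀ S, 0 ≤ f S)
    (hf : Submodular f) (S A : Finset α) (hn : 1 ≤ A.card) :
    ∀ k : ℕ, k ≤ A.card →
      ∑ B ∈ A.powersetCard k, f (S ∪ B)
        ≥ (A.card.choose k : ℝ) * (((A.card : ℝ) - k) / A.card) * f S := by
  intro k
  induction k with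
  | zero =>
    intro _
    have hn0 : (A.card : ℝ) ≠ 0 := by positivity
    simp only [Finset.powersetCard_zero, Finset.sum_singleton, Finset.union_empty,
      Nat.choose_zero_right, Nat.cast_zero, Nat.cast_one, sub_zero]
    rw [div_self hn0]
    simp
  | succ j ih =>
    intro hjk
    have hj : j ≤ A.card := le_trans (Nat.le_succ j) hjk
    have hT := ih hj
    have hstep := step_lemma f hf0 hf S A j hjk
    have hpos : (0:ℝ) < (j : ℝ) + 1 := by positivity
    have hcoef : (0:ℝ) ≤ (A.card : ℝ) - (j + 1) := by
      have : ((j:ℕ) + 1 : ℝ) ≤ (A.card : ℝ) := by exact_mod_cast hjk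
      push_cast at this ⊢
      linarith
    have h4 : ((A.card : ℝ) - (j + 1)) * ∑ B ∈ A.powersetCard j, f (S ∪ B)
        ≥ ((A.card : ℝ) - (j + 1)) * ((A.card.choose j : ℝ) * (((A.card : ℝ) - j) / A.card) * f S) :=
      mul_le_mul_of_nonneg_left hT hcoef
    have hch : ((A.card.choose (j+1) : ℝ)) * ((j:ℝ) + 1) = (A.card.choose j : ℝ) * ((A.card : ℝ) - j) := by
      have := Nat.choose_succ_right_eq A.card j
      have hcast : ((A.card.choose (j+1) * (j+1) : ℕ) : ℝ) = ((A.card.choose j * (A.card - j) : ℕ) : ℝ) := by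
        exact_mod_cast congrArg (Nat.cast : ℕ → ℝ) this
      push_cast [Nat.cast_sub hj] at hcast
      linarith
    -- conclude
    have hineq : ((j : ℝ) + 1) * ∑ B ∈ A.powersetCard (j+1), f (S ∪ B)
        ≥ ((j:ℝ) + 1) * ((A.card.choose (j+1) : ℝ) * (((A.card : ℝ) - (j+1)) / A.card) * f S) := by
      have : ((j:ℝ) + 1) * ((A.card.choose (j+1) : ℝ) * (((A.card : ℝ) - (j+1)) / A.card) * f S)
          = ((A.card : ℝ) - (j + 1)) * ((A.card.choose j : ℝ) * (((A.card : ℝ) - j) / A.card) * f S) := by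
        have hA0 : (A.card : ℝ) ≠ 0 := by positivity
        field_simp
        linear_combination (((A.card : ℝ) - ((j:ℝ) + 1)) * f S) * hch
      rw [this]
      push_cast at hstep h4 ⊢
      linarith
    have := (mul_le_mul_iff_right₀ hpos).mp hineq
    push_cast at this ⊢
    linarith

theorem average_addition_lower_bound {α : Type*} [DecidableEq α] [Fintype α]
    (f : Finset α → ℝ) (hf0 : ∀ S : Finset α, 0 ≤ f S) (hf : Submodular f)
    (S A : Finset α) (k : ℕ) (hk1 : 1 ≤ k) (hk : k < A.card) :
    (1 / (A.card.choose k : ℝ)) * ∑ B ∈ A.powersetCard k, f (S ∪ B) ≥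
      f S - ((k : ℝ) / ((A.card : ℝ) - (k : ℝ))) *
        sSup {y : ℝ | ∃ S' : Finset α, S ⊆ S' ∧ S' ⊆ S ∪ A ∧ y = f S'} := by
  set n := A.card with hn
  have hkn : k ≤ n := le_of_lt hk
  have hn1 : 1 ≤ n := le_trans hk1 hkn
  set Mset : Set ℝ := {y : ℝ | ∃ S' : Finset α, S ⊆ S' ∧ S' ⊆ S ∪ A ∧ y = f S'} with hMset
  have hfin : Mset.Finite := by
    apply Set.Finite.subset (Set.finite_range f)
    rintro y ⟨S', _, _, rfl⟩
    exact ⟨S', rfl⟩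
  have hmem : f S ∈ Mset := ⟨S, Finset.Subset.refl S, Finset.subset_union_left, rfl⟩
  have hbdd : BddAbove Mset := hfin.bddAbove
  have hM : f S ≤ sSup Mset := le_csSup hbdd hmem
  have hM0 : 0 ≤ sSup Mset := le_trans (hf0 S) hM
  have hT := main_ind f hf0 hf S A hn1 k hkn
  have hC : (0:ℝ) < (n.choose k : ℝ) := by
    exact_mod_cast Nat.choose_pos hkn
  have h1 : ((n:ℝ) - k) / n * f S ≤ (1 / (n.choose k : ℝ)) * ∑ B ∈ A.powersetCard k, f (S ∪ B) := by
    have h := mul_le_mul_of_nonneg_left hT (by positivity : (0:ℝ) ≤ 1 / (n.choose k : ℝ))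
    calc ((n:ℝ) - k) / n * f S
        = 1 / (n.choose k : ℝ) * ((n.choose k : ℝ) * (((n:ℝ) - k) / n) * f S) := by
          field_simp
      _ ≤ _ := h
  have hn0 : (0:ℝ) < (n : ℝ) := by exact_mod_cast hn1
  have hnk : (0:ℝ) < (n : ℝ) - k := by
    have : (k:ℝ) < (n:ℝ) := by exact_mod_cast hk
    linarith
  have heq : ((n:ℝ) - k) / n * f S = f S - (k:ℝ) / n * f S := by
    field_simp
  have h5 : (k:ℝ) / n ≤ (k:ℝ) / ((n:ℝ) - k) := by
    apply div_le_div_of_nonneg_left (by positivity) hnk (by linarith)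
  have hfrac : (k:ℝ) / n * f S ≤ (k:ℝ) / ((n:ℝ) - k) * sSup Mset :=
    mul_le_mul h5 hM (hf0 S) (by positivity)
  linarith
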